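/- Let Γ = F ⋊_φ ℤ where F is a group with trivial centre. If the image of φ in Out(F) has finite order m, then the centre of Γ is infinite cyclic, generated by an element x₀^{-1}·t^m where φ^m is conjugation by x₀. -/

import Mathlib

section aux
variable {F : Type*} [Group F]

lemma conj_inj_of_trivial_center (hF : Subgroup.center F = ⊥) {a b : F}
    (h : MulAut.conj a = MulAut.conj b) : a = b := by
  have hc : b⁻¹ * a ∈ Subgroup.center F := by
    rw [Subgroup.mem_center_iff]
    intro g
    have h' : a * g * a⁻¹ = b * g * b⁻¹ := by
      have := congrArg (fun ψ : MulAut F => ψ g) h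
      simpa [MulAut.conj_apply] using this
    calc g * (b⁻¹ * a) = b⁻¹ * (b * g * b⁻¹) * a := by group
      _ = b⁻¹ * (a * g * a⁻¹) * a := by rw [← h']
      _ = b⁻¹ * a * g := by group
  rw [hF, Subgroup.mem_bot] at hc
  rw [← mul_one b, ← hc]
  group

end aux

theorem stmt_3 (F : Type*) [Group F] (hF : Subgroup.center F = ⊥) (φ : MulAut F)
    (m : ℕ) (hm : 0 < m) (x₀ : F) (hφm : φ ^ m = MulAut.conj x₀)
    (hmin : ∀ k : ℕ, 0 < k → k < m → ∀ y : F, φ ^ k ≠ MulAut.conj y) :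
    Subgroup.center (F ⋊[zpowersHom (MulAut F) φ] Multiplicative ℤ) =
        Subgroup.zpowers
          (⟨x₀⁻¹, Multiplicative.ofAdd (m : ℤ)⟩ :
            F ⋊[zpowersHom (MulAut F) φ] Multiplicative ℤ) ∧
      ¬ IsOfFinOrder
          (⟨x₀⁻¹, Multiplicative.ofAdd (m : ℤ)⟩ :
            F ⋊[zpowersHom (MulAut F) φ] Multiplicative ℤ) := by
  set z : F ⋊[zpowersHom (MulAut F) φ] Multiplicative ℤ :=
    ⟨x₀⁻¹, Multiplicative.ofAdd (m : ℤ)⟩ with hzdef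
  -- φ fixes x₀
  have hx : φ x₀ = x₀ := by
    apply conj_inj_of_trivial_center hF
    ext g
    obtain ⟨g', rfl⟩ := φ.surjective g
    have hcomm : φ * φ ^ m = φ ^ m * φ := by rw [← pow_succ', pow_succ]
    have h1 : φ ((φ ^ m) g') = (φ ^ m) (φ g') := by
      calc φ ((φ ^ m) g') = (φ * φ ^ m) g' := rfl
        _ = (φ ^ m * φ) g' := by rw [hcomm]
        _ = (φ ^ m) (φ g') := rfl
    rw [hφm] at h1
    simp only [MulAut.conj_apply, map_mul, map_inv] at h1 ⊢
    exact h1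
  have hφx : ∀ k : ℤ, (φ ^ k) x₀ = x₀ := by
    intro k
    have hst : φ ∈ MulAction.stabilizer (MulAut F) x₀ := hx
    have := Subgroup.zpow_mem _ hst k
    simpa [MulAction.mem_stabilizer_iff] using this
  -- z is central
  have hz : z ∈ Subgroup.center (F ⋊[zpowersHom (MulAut F) φ] Multiplicative ℤ) := by
    rw [Subgroup.mem_center_iff]
    intro g
    refine SemidirectProduct.ext ?_ ?_
    · show g.left * (zpowersHom (MulAut F) φ g.right) z.left =
        z.left * (zpowersHom (MulAut F) φ z.right) g.left
      rw [zpowersHom_apply, zpowersHom_apply]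
      have h1 : (φ ^ g.right.toAdd) z.left = x₀⁻¹ := by
        show (φ ^ g.right.toAdd) x₀⁻¹ = x₀⁻¹
        rw [map_inv, hφx]
      have h2 : (φ ^ z.right.toAdd) g.left = x₀ * g.left * x₀⁻¹ := by
        show (φ ^ (Multiplicative.ofAdd (m : ℤ)).toAdd) g.left = _
        simp only [toAdd_ofAdd, zpow_natCast, hφm, MulAut.conj_apply]
      rw [h1, h2]
      show g.left * x₀⁻¹ = x₀⁻¹ * (x₀ * g.left * x₀⁻¹)
      group
    · show g.right * z.right = z.right * g.right
      exact mul_comm _ _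
  -- key: central elements satisfy φ^n = conj left⁻¹
  have key : ∀ a : F ⋊[zpowersHom (MulAut F) φ] Multiplicative ℤ,
      a ∈ Subgroup.center (F ⋊[zpowersHom (MulAut F) φ] Multiplicative ℤ) →
      (φ ^ a.right.toAdd : MulAut F) = MulAut.conj a.left⁻¹ := by
    intro a ha
    ext x
    have h1 : SemidirectProduct.inl x * a = a * SemidirectProduct.inl x :=
      Subgroup.mem_center_iff.mp ha _
    have h2 := congrArg SemidirectProduct.left h1
    simp only [SemidirectProduct.mul_left, SemidirectProduct.left_inl,
      SemidirectProduct.right_inl, map_one, MulAut.one_apply, zpowersHom_apply] at h2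
    -- h2 : x * a.left = a.left * (φ ^ a.right.toAdd) x
    rw [MulAut.conj_apply, inv_inv]
    calc (φ ^ a.right.toAdd) x = a.left⁻¹ * (a.left * (φ ^ a.right.toAdd) x) := by group
      _ = a.left⁻¹ * (x * a.left) := by rw [← h2]
      _ = a.left⁻¹ * x * a.left := by group
  constructor
  · apply le_antisymm
    · intro a ha
      set n : ℤ := a.right.toAdd with hn
      have hkey := key a ha
      -- n is divisible by m
      have hdvd : (m : ℤ) ∣ n := by
        by_contra hnd
        have hr : n % (m : ℤ) ≠ 0 := fun h => hnd (Int.dvd_of_emod_eq_zero h)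
        set q : ℤ := n / (m : ℤ) with hq
        set r : ℤ := n % (m : ℤ) with hrdef
        have hr0 : 0 ≤ r := Int.emod_nonneg n (by exact_mod_cast hm.ne')
        have hrlt : r < (m : ℤ) := Int.emod_lt_of_pos n (by exact_mod_cast hm)
        have hnr : n = (m : ℤ) * q + r := (Int.mul_ediv_add_emod n m).symm
        have hφr : φ ^ r = MulAut.conj (x₀ ^ (-q) * a.left⁻¹) := by
          have h3 : (φ ^ ((m : ℤ) * q) : MulAut F) = MulAut.conj (x₀ ^ q) := by
            rw [zpow_mul, zpow_natCast, hφm, ← map_zpow]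
          calc (φ ^ r : MulAut F) = φ ^ (-((m : ℤ) * q) + n) := by rw [hnr]; ring_nf
            _ = (φ ^ ((m : ℤ) * q))⁻¹ * φ ^ n := by rw [zpow_add, zpow_neg]
            _ = MulAut.conj (x₀ ^ (-q) * a.left⁻¹) := by
                rw [map_mul, zpow_neg, map_inv, ← h3, ← hkey]
        have hrnat : (r.toNat : ℤ) = r := Int.toNat_of_nonneg hr0
        refine hmin r.toNat ?_ ?_ (x₀ ^ (-q) * a.left⁻¹) ?_
        · omega
        · omega
        · rw [← zpow_natCast φ r.toNat, hrnat, hφr]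
      obtain ⟨q, hq⟩ := hdvd
      rw [Subgroup.mem_zpowers_iff]
      refine ⟨q, ?_⟩
      have hzq : z ^ q ∈ Subgroup.center (F ⋊[zpowersHom (MulAut F) φ] Multiplicative ℤ) :=
        Subgroup.zpow_mem _ hz q
      have hright : (z ^ q).right = a.right := by
        have h4 : (z ^ q).right = z.right ^ q := by
          have := map_zpow (SemidirectProduct.rightHom (φ := zpowersHom (MulAut F) φ)) z q
          simpa [SemidirectProduct.rightHom_eq_right] using this
        rw [h4]
        apply Multiplicative.toAdd.injective
        have h5 : (z.right ^ q).toAdd = q * (m : ℤ) := by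
          show (((Multiplicative.ofAdd (m : ℤ)) ^ q)).toAdd = q * (m : ℤ)
          simp
        rw [h5, ← hn, hq]; ring
      have hleft : (z ^ q).left = a.left := by
        have k1 := key _ hzq
        rw [hright, hkey] at k1
        have := conj_inj_of_trivial_center hF k1.symm
        exact inv_injective this
      exact SemidirectProduct.ext hleft hright
    · exact Subgroup.zpowers_le.mpr hz
  · intro hfin
    obtain ⟨k, hk, hk1⟩ := isOfFinOrder_iff_pow_eq_one.mp hfin
    have h2 : (z.right) ^ k = 1 := by
      have := map_pow (SemidirectProduct.rightHom (φ := zpowersHom (MulAut F) φ)) z k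
      rw [hk1, map_one] at this
      simpa [SemidirectProduct.rightHom_eq_right] using this.symm
    have h3 : (k : ℤ) * (m : ℤ) = 0 := by
      have := congrArg Multiplicative.toAdd h2
      rw [toAdd_pow, toAdd_one] at this
      have this' : k • (m : ℤ) = 0 := this
      simpa [nsmul_eq_mul] using this'
    have hkm : k * m = 0 := by exact_mod_cast h3
    rcases Nat.mul_eq_zero.mp hkm with h | h <;> omega
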